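/- Let A₁,…,A₉ be self-adjoint unitaries on a Hilbert space H such that operators sharing a row or column of the 3×3 magic square commute, all three row products equal I, and the first two column products A₁A₄A₇ = A₂A₅A₈ = I. Then the operator E := A₃A₆A₉ commutes with every Aᵢ, i ∈ {1,…,9}. -/
import Mathlib

section keylemma
variable {M : Type*} [Monoid M]

/-- cancellation for involutions -/
private lemma cancel_inv {u x y : M} (hu : u * u = 1) (h : u * x = y) : x = u * y := by
  rw [← h, ← mul_assoc, hu, one_mul]

/-- from a triple product equal to one and the last factor an involution,
the last factor equals the product of the first two -/
private lemma entry_eq {x y z : M} (h : x * y * z = 1) (hz : z * z = 1) : z = x * y := by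
  calc z = x * y * z * z := by rw [h, one_mul]
  _ = x * y := by rw [mul_assoc (x*y), hz, mul_one]

/-- The key computation: with the stated commutations,
`a*b*(c*d)*(a*c*(b*d)) = (a*(b*c))^2`, hence commutes with `a`. -/
private lemma key (a b c d : M) (hc : c * c = 1) (hd : d * d = 1)
    (hab : Commute a b) (hcd : Commute c d) (hac : Commute a c)
    (h3 : Commute (c * d) (a * c * (b * d))) :
    Commute a (a * b * (c * d) * (a * c * (b * d))) := by
  have h1 : a * c * (b * d) * (c * d) = a * (c * (b * c)) := by
    calc a * c * (b * d) * (c * d) = a * (c * (b * (d * (c * d)))) := by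
          simp [mul_assoc]
    _ = a * (c * (b * (d * (d * c)))) := by rw [hcd.eq]
    _ = a * (c * (b * c)) := by rw [← mul_assoc d d, hd, one_mul]
  have h2 : c * (d * (a * c * (b * d))) = a * (c * (b * c)) := by
    rw [← mul_assoc c d]; exact h3.eq.trans h1
  have hdX : d * (a * c * (b * d)) = c * (a * (c * (b * c))) := cancel_inv hc h2
  have hX : a * c * (b * d) = d * (c * (a * (c * (b * c)))) := cancel_inv hd hdX
  have hZ : a * c * (b * d) = d * (a * (b * c)) := by
    rw [hX]
    congr 1
    calc c * (a * (c * (b * c))) = a * c * (c * (b * c)) := by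
          rw [← mul_assoc, ← hac.eq]
    _ = a * (c * c * (b * c)) := by simp [mul_assoc]
    _ = a * (b * c) := by rw [hc, one_mul]
  have hE : a * b * (c * d) * (a * c * (b * d)) = (a * (b * c)) * (a * (b * c)) := by
    rw [hZ]
    calc a * b * (c * d) * (d * (a * (b * c)))
        = a * (b * (c * (d * (d * (a * (b * c)))))) := by simp [mul_assoc]
    _ = a * (b * (c * (d * d * (a * (b * c))))) := by rw [← mul_assoc d d]
    _ = a * (b * (c * (a * (b * c)))) := by rw [hd, one_mul]
    _ = (a * (b * c)) * (a * (b * c)) := by simp [mul_assoc]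
  have hW : Commute a (a * (b * c)) :=
    (Commute.refl a).mul_right (hab.mul_right hac)
  rw [hE]
  exact hW.mul_right hW

end keylemma

/-- magic-square operators (`A i j` sits in row `i`, column `j`): self-adjoint
unitaries, same row/column entries commute, all row products equal `I`, and the first two
column products equal `I`. Then `E := A₃A₆A₉` commutes with every `Aᵢ`. -/
theorem stmt7 {H : Type*} [NormedAddCommGroup H] [InnerProductSpace ℂ H] [CompleteSpace H]
    (A : Fin 3 → Fin 3 → (H →L[ℂ] H))
    (hsa : ∀ i j, IsSelfAdjoint (A i j))
    (hsq : ∀ i j, A i j * A i j = 1)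
    (hrowcomm : ∀ r c c', Commute (A r c) (A r c'))
    (hcolcomm : ∀ c r r', Commute (A r c) (A r' c))
    (hrow : ∀ r, A r 0 * A r 1 * A r 2 = 1)
    (hcol0 : A 0 0 * A 1 0 * A 2 0 = 1)
    (hcol1 : A 0 1 * A 1 1 * A 2 1 = 1) :
    ∀ i j, Commute (A 0 2 * A 1 2 * A 2 2) (A i j) := by
  set a := A 0 0 with ha'
  set b := A 0 1 with hb'
  set c := A 1 0 with hc'
  set d := A 1 1 with hd'
  -- entry formulas
  have h02 : A 0 2 = a * b := entry_eq (hrow 0) (hsq 0 2)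
  have h12 : A 1 2 = c * d := entry_eq (hrow 1) (hsq 1 2)
  have h20 : A 2 0 = a * c := entry_eq hcol0 (hsq 2 0)
  have h21 : A 2 1 = b * d := entry_eq hcol1 (hsq 2 1)
  have h22 : A 2 2 = a * c * (b * d) := by
    have := entry_eq (hrow 2) (hsq 2 2)
    rw [h20, h21] at this; rw [this, mul_assoc]
  -- commutation hypotheses in letter form
  have hab : Commute a b := hrowcomm 0 0 1
  have hcd : Commute c d := hrowcomm 1 0 1
  have hba : Commute b a := hab.symm
  have hdc : Commute d c := hcd.symm
  have hac : Commute a c := hcolcomm 0 0 1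
  have hbd : Commute b d := hcolcomm 1 0 1
  have hca : Commute c a := hac.symm
  have hdb : Commute d b := hbd.symm
  have h4 : Commute (a * c) (b * d) := by
    have := hrowcomm 2 0 1; rwa [h20, h21] at this
  have h1' : Commute (a * b) (c * d) := by
    have := hcolcomm 2 0 1; rwa [h02, h12] at this
  have h2' : Commute (a * b) (a * c * (b * d)) := by
    have := hcolcomm 2 0 2; rwa [h02, h22] at this
  have h3' : Commute (c * d) (a * c * (b * d)) := by
    have := hcolcomm 2 1 2; rwa [h12, h22] at this
  -- the four key commutations
  have Ca : Commute a (a * b * (c * d) * (a * c * (b * d))) :=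
    key a b c d (hsq 1 0) (hsq 1 1) hab hcd hac h3'
  have Cb : Commute b (a * b * (c * d) * (a * c * (b * d))) := by
    have hbdac : b * d * (a * c) = a * c * (b * d) := h4.eq.symm
    have h3'' : Commute (d * c) (b * d * (a * c)) := by
      rw [hdc.eq, hbdac]; exact h3'
    have := key b a d c (hsq 1 1) (hsq 1 0) hba hdc hbd h3''
    rwa [hba.eq, hdc.eq, hbdac] at this
  have Cd : Commute d (a * b * (c * d) * (a * c * (b * d))) := by
    have hdbca : d * b * (c * a) = a * c * (b * d) := by
      rw [hdb.eq, hca.eq]; exact h4.eq.symm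
    have h3'' : Commute (b * a) (d * b * (c * a)) := by
      rw [hba.eq, hdbca]; exact h2'
    have := key d c b a (hsq 0 1) (hsq 0 0) hdc hba hdb h3''
    rwa [hdc.eq, hba.eq, hdbca, show c * d * (a * b) = a * b * (c * d) from h1'.eq.symm]
      at this
  have Cc : Commute c (a * b * (c * d) * (a * c * (b * d))) := by
    have hcadb : c * a * (d * b) = a * c * (b * d) := by rw [hca.eq, hdb.eq]
    have h3'' : Commute (a * b) (c * a * (d * b)) := by rw [hcadb]; exact h2'
    have := key c d a b (hsq 0 0) (hsq 0 1) hcd hab hca h3''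
    rwa [hcadb, show c * d * (a * b) = a * b * (c * d) from h1'.eq.symm] at this
  -- assemble
  have CEa := Ca.symm
  have CEb := Cb.symm
  have CEc := Cc.symm
  have CEd := Cd.symm
  have goalE : ∀ i j, Commute (a * b * (c * d) * (a * c * (b * d))) (A i j) := by
    intro i j
    fin_cases i <;> fin_cases j
    · exact CEa
    · exact CEb
    · show Commute _ (A 0 2); rw [h02]; exact CEa.mul_right CEb
    · exact CEc
    · exact CEd
    · show Commute _ (A 1 2); rw [h12]; exact CEc.mul_right CEd
    · show Commute _ (A 2 0); rw [h20]; exact CEa.mul_right CEc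
    · show Commute _ (A 2 1); rw [h21]; exact CEb.mul_right CEd
    · show Commute _ (A 2 2); rw [h22]; exact (CEa.mul_right CEc).mul_right (CEb.mul_right CEd)
  intro i j
  have := goalE i j
  rwa [h02, h12, h22]
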